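/- arXiv:2105.02910 — 4 statements merged into one kernel-verified Lean document; each statement's English description precedes it below -/
import Mathlib

section
/- Let G be a 3-edge-connected graph with DFS tree T, and let u, v, w be vertices with u a descendant of v and v a descendant of w. Then {(u,p(u)), (v,p(v)), (w,p(w))} is a 3-edge cut of G if and only if B(v) = B(u) ⊔ B(w) (disjoint union). -/
variable {V E : Type}

/-- Reachability in the multigraph with edge-endpoint map `ends`,
avoiding (i.e. after deleting) the edges in `S`. -/
def Reach (ends : E → V × V) (S : Set E) : V → V → Prop :=
  Relation.ReflTransGen (fun a b => ∃ e, e ∉ S ∧ (ends e = (a, b) ∨ ends e = (b, a)))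

/-- The multigraph is connected. -/
def Connected (ends : E → V × V) : Prop := ∀ u v : V, Reach ends ∅ u v

/-- `u` and `v` are `k`-edge-connected: no set of at most `k - 1` edges separates them. -/
def KConn (ends : E → V × V) (k : ℕ) (u v : V) : Prop :=
  ∀ S : Finset E, S.card ≤ k - 1 → Reach ends (↑S) u v

/-- The multigraph is `k`-edge-connected: no edge cut of size less than `k`. -/
def GraphKConn (ends : E → V × V) (k : ℕ) : Prop :=
  ∀ S : Finset E, S.card < k → ∀ u v : V, Reach ends (↑S) u v

/-- `S` is an edge cut: removing it disconnects the graph. -/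
def IsCutSet (ends : E → V × V) (S : Set E) : Prop :=
  ∃ u v : V, ¬ Reach ends S u v

/-- A (candidate) DFS tree on the multigraph `ends : E → V × V`: a root, a parent
function, a choice of a tree edge for each non-root vertex, and a preorder numbering. -/
structure DFSTree (V E : Type) where
  ends : E → V × V
  root : V
  parent : V → V
  treeEdge : V → E
  pre : V → ℕ

namespace DFSTree

variable (t : DFSTree V E)

/-- `t.Anc a b` : `a` is an ancestor of `b` (every vertex is an ancestor of itself). -/
def Anc (a b : V) : Prop :=
  Relation.ReflTransGen (fun x y => x ≠ t.root ∧ y = t.parent x) b a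

/-- `a` is a proper ancestor of `b`. -/
def ProperAnc (a b : V) : Prop := t.Anc a b ∧ a ≠ b

def IsTreeEdge (e : E) : Prop := ∃ v, v ≠ t.root ∧ e = t.treeEdge v

/-- The set `B(v)`: back-edges `(x, y)` with `x` a descendant of `v` and `y` a
proper ancestor of `v`. -/
def B (v : V) : Set E :=
  {e | ¬ t.IsTreeEdge e ∧ t.Anc v (t.ends e).1 ∧ t.ProperAnc (t.ends e).2 v}

/-- `m` is the nearest common ancestor of the set `S` of vertices. -/
def IsNCA (S : Set V) (m : V) : Prop :=
  (∀ x ∈ S, t.Anc m x) ∧ ∀ m' : V, (∀ x ∈ S, t.Anc m' x) → t.Anc m' m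

/-- `m = M(v)`: the nearest common ancestor of all lower ends of back-edges in `B(v)`. -/
def IsM (v m : V) : Prop := t.IsNCA {x | ∃ e ∈ t.B v, (t.ends e).1 = x} m

/-- `h = high(v)`: the highest (in preorder) upper end of a back-edge in `B(v)`. -/
def IsHigh (v h : V) : Prop :=
  (∃ e ∈ t.B v, (t.ends e).2 = h) ∧ ∀ e ∈ t.B v, t.pre (t.ends e).2 ≤ t.pre h

/-- `l = low(v)`: the lowest (in preorder) upper end of a back-edge in `B(v)`. -/
def IsLow (v l : V) : Prop :=
  (∃ e ∈ t.B v, (t.ends e).2 = l) ∧ ∀ e ∈ t.B v, t.pre l ≤ t.pre (t.ends e).2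

/-- `v` and `w` have the same `M`-value. -/
def SameM (v w : V) : Prop := ∃ m, t.IsM v m ∧ t.IsM w m

/-- `n = nextM(v)`: the greatest vertex smaller than `v` with the same `M`-value. -/
def IsNextM (v n : V) : Prop :=
  t.pre n < t.pre v ∧ t.SameM v n ∧
    ∀ z, t.pre z < t.pre v → t.SameM v z → t.pre z ≤ t.pre n

/-- `l = lastM(v)`: the smallest vertex with the same `M`-value as `v`. -/
def IsLastM (v l : V) : Prop :=
  t.SameM v l ∧ ∀ z, t.SameM v z → t.pre l ≤ t.pre z

/-- `t` really is a DFS spanning tree of the connected multigraph `ends`. -/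
structure IsDFS : Prop where
  conn : Connected t.ends
  parent_root : t.parent t.root = t.root
  tree_ends : ∀ v, v ≠ t.root → t.ends (t.treeEdge v) = (v, t.parent v)
  treeEdge_inj : ∀ v w, v ≠ t.root → w ≠ t.root → t.treeEdge v = t.treeEdge w → v = w
  back : ∀ e, ¬ t.IsTreeEdge e → t.Anc (t.ends e).2 (t.ends e).1
  pre_inj : Function.Injective t.pre
  pre_mono : ∀ a b, t.Anc a b → t.pre a ≤ t.pre b
  pre_interval : ∀ a b : V,
    t.pre a ≤ t.pre b → t.pre b < t.pre a + {x | t.Anc a x}.ncard → t.Anc a b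

end DFSTree

section Helpers

variable {V E : Type} {t : DFSTree V E}

namespace DFSTree

lemma anc_trans {a b c : V} (h1 : t.Anc a b) (h2 : t.Anc b c) : t.Anc a c :=
  Relation.ReflTransGen.trans h2 h1

lemma anc_refl (a : V) : t.Anc a a := Relation.ReflTransGen.refl

lemma anc_antisymm (ht : t.IsDFS) {a b : V} (h1 : t.Anc a b) (h2 : t.Anc b a) : a = b :=
  ht.pre_inj (le_antisymm (ht.pre_mono a b h1) (ht.pre_mono b a h2))

lemma anc_parent {x : V} (hx : x ≠ t.root) : t.Anc (t.parent x) x :=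
  Relation.ReflTransGen.single ⟨hx, rfl⟩

lemma anc_of_parent {a x : V} (hx : x ≠ t.root) (h : t.Anc a (t.parent x)) : t.Anc a x :=
  Relation.ReflTransGen.head ⟨hx, rfl⟩ h

lemma anc_step {a x : V} (h : t.Anc a x) (hne : x ≠ a) : t.Anc a (t.parent x) := by
  rcases Relation.ReflTransGen.cases_head h with h' | ⟨y, ⟨hx, hy⟩, h'⟩
  · exact absurd h' hne
  · exact hy ▸ h'

lemma anc_ne_root {a x : V} (h : t.Anc a x) (hne : x ≠ a) : x ≠ t.root := by
  rcases Relation.ReflTransGen.cases_head h with h' | ⟨y, ⟨hx, hy⟩, h'⟩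
  · exact absurd h' hne
  · exact hx

lemma anc_total {a b x : V} (ha : t.Anc a x) (hb : t.Anc b x) : t.Anc a b ∨ t.Anc b a := by
  induction hb with
  | refl => exact Or.inl ha
  | tail hb' hstep ih =>
    rcases ih with ih | ih
    · -- ih : t.Anc a c, hstep : r c b
      rcases Relation.ReflTransGen.cases_head ih with h' | ⟨y, hy, h'⟩
      · subst h'
        exact Or.inr (Relation.ReflTransGen.single hstep)
      · rcases hy with ⟨hcr, hyp⟩
        rcases hstep with ⟨-, hb2⟩
        subst hb2; subst hyp
        exact Or.inl h'
    · exact Or.inr (Relation.ReflTransGen.tail ih hstep)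

end DFSTree

end Helpers
section Helpers2

variable {V E : Type} {t : DFSTree V E}

namespace DFSTree

lemma reach_symm {ends : E → V × V} {S : Set E} {a b : V} (h : Reach ends S a b) :
    Reach ends S b a :=
  (@Relation.ReflTransGen.stdSymm _ _ ⟨fun _ _ ⟨e, he, h'⟩ => ⟨e, he, h'.symm⟩⟩).symm _ _ h

lemma reach_trans {ends : E → V × V} {S : Set E} {a b c : V}
    (h1 : Reach ends S a b) (h2 : Reach ends S b c) : Reach ends S a c :=
  Relation.ReflTransGen.trans h1 h2

lemma anc_of_root {c : V} (h : t.Anc c t.root) : c = t.root := by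
  rcases Relation.ReflTransGen.cases_head h with h' | ⟨y, ⟨hr, -⟩, -⟩
  · exact h'.symm
  · exact absurd rfl hr

lemma anc_root (ht : t.IsDFS) (z : V) : t.Anc t.root z := by
  have h := ht.conn t.root z
  induction h with
  | refl => exact t.anc_refl _
  | tail h1 h2 ih =>
    obtain ⟨e, -, hee⟩ := h2
    by_cases hte : t.IsTreeEdge e
    · obtain ⟨x, hx, rfl⟩ := hte
      rw [ht.tree_ends x hx, Prod.mk.injEq, Prod.mk.injEq] at hee
      rcases hee with ⟨rfl, rfl⟩ | ⟨rfl, rfl⟩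
      · exact t.anc_step ih hx
      · exact t.anc_of_parent hx ih
    · have hb := ht.back e hte
      rcases hee with hee | hee <;> rw [hee] at hb <;> dsimp only at hb
      · rcases t.anc_total ih hb with h' | h'
        · exact h'
        · rw [t.anc_of_root h']; exact t.anc_refl _
      · exact t.anc_trans ih hb

end DFSTree

end Helpers2
section Helpers3

variable {V E : Type} {t : DFSTree V E}

namespace DFSTree

lemma reach_weaken {ends : E → V × V} {S S' : Set E}
    (h : ∀ e, e ∈ S → e ∉ S' → (ends e).1 = (ends e).2) {x y : V}
    (hr : Reach ends S' x y) : Reach ends S x y := by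
  induction hr with
  | refl => exact .refl
  | tail h1 h2 ih =>
    obtain ⟨e, he, hee⟩ := h2
    by_cases heS : e ∈ S
    · have hl := h e heS he
      rcases hee with hee | hee <;> rw [hee] at hl <;> dsimp only at hl
      · subst hl; exact ih
      · subst hl; exact ih
    · exact ih.tail ⟨e, heS, hee⟩

lemma climb (ht : t.IsDFS) (u v w : V) (hu : u ≠ t.root) (hv : v ≠ t.root) (hw : w ≠ t.root)
    (Q : V → Prop) (g : V)
    (hQ : ∀ x, x ≠ t.root → x ≠ g → Q x → Q (t.parent x))
    (hne : ∀ x, Q x → x ≠ g → x ≠ u ∧ x ≠ v ∧ x ≠ w) :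
    ∀ z, t.Anc g z → Q z → Reach t.ends {t.treeEdge u, t.treeEdge v, t.treeEdge w} z g := by
  intro z hgz
  induction hgz using Relation.ReflTransGen.head_induction_on with
  | refl => intro _; exact .refl
  | head h' h ih =>
    rename_i x c
    intro hQx
    by_cases hxg : x = g
    · subst hxg; exact .refl
    · obtain ⟨hxr, rfl⟩ := h'
      obtain ⟨h1, h2, h3⟩ := hne x hQx hxg
      refine Relation.ReflTransGen.head
        ⟨t.treeEdge x, ?_, Or.inl (ht.tree_ends x hxr)⟩ (ih (hQ x hxr hxg hQx))
      intro hmem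
      simp only [Set.mem_insert_iff, Set.mem_singleton_iff] at hmem
      rcases hmem with hm | hm | hm
      · exact h1 (ht.treeEdge_inj x u hxr hu hm)
      · exact h2 (ht.treeEdge_inj x v hxr hv hm)
      · exact h3 (ht.treeEdge_inj x w hxr hw hm)

end DFSTree

end Helpers3
section Helpers4

variable {V E : Type} {t : DFSTree V E}

namespace DFSTree


lemma reachD (ht : t.IsDFS) {u v w : V}
    (hu : u ≠ t.root) (hv : v ≠ t.root) (hw : w ≠ t.root)
    (huv : u ≠ v) (hvw : v ≠ w) (huw : u ≠ w)
    (hvu : t.Anc v u) (hwv : t.Anc w v) : ∀ z, t.Anc u z →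
    Reach t.ends {t.treeEdge u, t.treeEdge v, t.treeEdge w} z u := by
  intro z hz
  refine t.climb ht u v w hu hv hw (fun x => t.Anc u x) u ?_ ?_ z hz hz
  · exact fun x hxr hxg hq => t.anc_step hq hxg
  · intro x hq hxg
    refine ⟨hxg, ?_, ?_⟩
    · rintro rfl; exact huv (t.anc_antisymm ht hq hvu)
    · rintro rfl; exact huw (t.anc_antisymm ht hq (t.anc_trans hwv hvu))

lemma reachC (ht : t.IsDFS) {u v w : V}
    (hu : u ≠ t.root) (hv : v ≠ t.root) (hw : w ≠ t.root)
    (huv : u ≠ v) (hvw : v ≠ w) (huw : u ≠ w)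
    (hvu : t.Anc v u) (hwv : t.Anc w v) : ∀ z, t.Anc v z → ¬ t.Anc u z →
    Reach t.ends {t.treeEdge u, t.treeEdge v, t.treeEdge w} z v := by
  intro z hz hnz
  refine t.climb ht u v w hu hv hw (fun x => t.Anc v x ∧ ¬ t.Anc u x) v ?_ ?_ z hz ⟨hz, hnz⟩
  · rintro x hxr hxg ⟨h1, h2⟩
    exact ⟨t.anc_step h1 hxg, fun h => h2 (t.anc_of_parent hxr h)⟩
  · rintro x ⟨h1, h2⟩ hxg
    refine ⟨?_, hxg, ?_⟩
    · rintro rfl; exact h2 (t.anc_refl _)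
    · rintro rfl; exact hvw (t.anc_antisymm ht h1 hwv)

lemma reachB (ht : t.IsDFS) {u v w : V}
    (hu : u ≠ t.root) (hv : v ≠ t.root) (hw : w ≠ t.root)
    (huv : u ≠ v) (hvw : v ≠ w) (huw : u ≠ w)
    (hvu : t.Anc v u) (hwv : t.Anc w v) : ∀ z, t.Anc w z → ¬ t.Anc v z →
    Reach t.ends {t.treeEdge u, t.treeEdge v, t.treeEdge w} z w := by
  intro z hz hnz
  refine t.climb ht u v w hu hv hw (fun x => t.Anc w x ∧ ¬ t.Anc v x) w ?_ ?_ z hz ⟨hz, hnz⟩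
  · rintro x hxr hxg ⟨h1, h2⟩
    exact ⟨t.anc_step h1 hxg, fun h => h2 (t.anc_of_parent hxr h)⟩
  · rintro x ⟨h1, h2⟩ hxg
    refine ⟨?_, ?_, hxg⟩
    · rintro rfl; exact h2 (t.anc_trans hvu (t.anc_refl _))
    · rintro rfl; exact h2 (t.anc_refl _)

lemma reachA (ht : t.IsDFS) {u v w : V}
    (hu : u ≠ t.root) (hv : v ≠ t.root) (hw : w ≠ t.root)
    (huv : u ≠ v) (hvw : v ≠ w) (huw : u ≠ w)
    (hvu : t.Anc v u) (hwv : t.Anc w v) : ∀ z, ¬ t.Anc w z →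
    Reach t.ends {t.treeEdge u, t.treeEdge v, t.treeEdge w} z t.root := by
  intro z hnz
  refine t.climb ht u v w hu hv hw (fun x => ¬ t.Anc w x) t.root ?_ ?_ z (t.anc_root ht z) hnz
  · intro x hxr hxg h1 h
    exact h1 (t.anc_of_parent hxr h)
  · intro x h1 hxg
    refine ⟨?_, ?_, ?_⟩
    · rintro rfl; exact h1 (t.anc_trans hwv hvu)
    · rintro rfl; exact h1 hwv
    · rintro rfl; exact h1 (t.anc_refl _)

end DFSTree

end Helpers4
section Helpers5

variable {V E : Type} {t : DFSTree V E}

namespace DFSTree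

lemma rev_dir (ht : t.IsDFS) {u v w : V}
    (hu : u ≠ t.root) (hv : v ≠ t.root) (hw : w ≠ t.root)
    (huv : u ≠ v) (hvw : v ≠ w) (huw : u ≠ w)
    (hvu : t.Anc v u) (hwv : t.Anc w v)
    (hcond : t.B v = t.B u ∪ t.B w) (hdisj : Disjoint (t.B u) (t.B w)) :
    ¬ Reach t.ends {t.treeEdge u, t.treeEdge v, t.treeEdge w} v w := by
  set S : Set E := {t.treeEdge u, t.treeEdge v, t.treeEdge w} with hS
  have hwu : t.Anc w u := t.anc_trans hwv hvu
  have hBuv : t.B u ⊆ t.B v := by rw [hcond]; exact Set.subset_union_left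
  have hBwv : t.B w ⊆ t.B v := by rw [hcond]; exact Set.subset_union_right
  set P : V → Prop := fun z => t.Anc u z ∨ (t.Anc w z ∧ ¬ t.Anc v z) with hP
  have edgeP : ∀ e, e ∉ S → (P (t.ends e).1 ↔ P (t.ends e).2) := by
    intro e heS
    by_cases hte : t.IsTreeEdge e
    · obtain ⟨x, hx, rfl⟩ := hte
      have hxu : x ≠ u := by rintro rfl; exact heS (Or.inl rfl)
      have hxv : x ≠ v := by rintro rfl; exact heS (Or.inr (Or.inl rfl))
      have hxw : x ≠ w := by rintro rfl; exact heS (Or.inr (Or.inr rfl))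
      rw [ht.tree_ends x hx]
      by_cases hux : t.Anc u x
      · exact iff_of_true (Or.inl hux) (Or.inl (t.anc_step hux hxu))
      · by_cases hvx : t.Anc v x
        · refine iff_of_false ?_ ?_
          · rintro (h | ⟨h1, h2⟩)
            · exact hux h
            · exact h2 hvx
          · rintro (h | ⟨h1, h2⟩)
            · exact hux (t.anc_of_parent hx h)
            · exact h2 (t.anc_step hvx hxv)
        · by_cases hwx : t.Anc w x
          · exact iff_of_true (Or.inr ⟨hwx, hvx⟩)
              (Or.inr ⟨t.anc_step hwx hxw, fun h => hvx (t.anc_of_parent hx h)⟩)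
          · refine iff_of_false ?_ ?_
            · rintro (h | ⟨h1, h2⟩)
              · exact hwx (t.anc_trans hwu h)
              · exact hwx h1
            · rintro (h | ⟨h1, h2⟩)
              · exact hux (t.anc_of_parent hx h)
              · exact hwx (t.anc_of_parent hx h1)
    · have hb := ht.back e hte
      set a := (t.ends e).1 with ha
      set b := (t.ends e).2 with hbdef
      by_cases hua : t.Anc u a
      · refine iff_of_true (Or.inl hua) ?_
        by_cases hub : t.Anc u b
        · exact Or.inl hub
        · have hbu : t.Anc b u := by
            rcases t.anc_total hb hua with h | h
            · exact h
            · exact absurd h hub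
          have hbune : b ≠ u := by rintro rfl; exact hub (t.anc_refl _)
          have heBu : e ∈ t.B u := ⟨hte, hua, hbu, hbune⟩
          obtain ⟨-, -, hbv, hbvne⟩ := hBuv heBu
          have hnBw : e ∉ t.B w := fun h => (Set.disjoint_left.mp hdisj) heBu h
          have hnpr : ¬ t.ProperAnc b w := fun h => hnBw ⟨hte, t.anc_trans hwu hua, h⟩
          rcases t.anc_total hbv hwv with h | h
          · have hbw : b = w := by
              by_contra hne; exact hnpr ⟨h, hne⟩
            subst hbw
            exact Or.inr ⟨t.anc_refl _, fun h' => hvw (t.anc_antisymm ht h' hwv)⟩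
          · exact Or.inr ⟨h, fun h' => hbvne (t.anc_antisymm ht hbv h')⟩
      · by_cases hva : t.Anc v a
        · refine iff_of_false ?_ ?_
          · rintro (h | ⟨h1, h2⟩)
            · exact hua h
            · exact h2 hva
          · by_cases hvb : t.Anc v b
            · rintro (h | ⟨h1, h2⟩)
              · exact hua (t.anc_trans h hb)
              · exact h2 hvb
            · have hbv : t.Anc b v := by
                rcases t.anc_total hb hva with h | h
                · exact h
                · exact absurd h hvb
              have hbvne : b ≠ v := by rintro rfl; exact hvb (t.anc_refl _)
              have heBv : e ∈ t.B v := ⟨hte, hva, hbv, hbvne⟩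
              rw [hcond] at heBv
              rcases heBv with h | h
              · exact absurd h.2.1 hua
              · obtain ⟨-, -, hbw, hbwne⟩ := h
                rintro (h' | ⟨h1, h2⟩)
                · exact hvb (t.anc_trans hvu h')
                · exact hbwne (t.anc_antisymm ht hbw h1)
        · by_cases hwa : t.Anc w a
          · refine iff_of_true (Or.inr ⟨hwa, hva⟩) ?_
            by_cases hwb : t.Anc w b
            · exact Or.inr ⟨hwb, fun h => hva (t.anc_trans h hb)⟩
            · have hbw : t.Anc b w := by
                rcases t.anc_total hb hwa with h | h
                · exact h
                · exact absurd h hwb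
              have hbwne : b ≠ w := by rintro rfl; exact hwb (t.anc_refl _)
              have heBw : e ∈ t.B w := ⟨hte, hwa, hbw, hbwne⟩
              exact absurd (hBwv heBw).2.1 hva
          · refine iff_of_false ?_ ?_
            · rintro (h | ⟨h1, h2⟩)
              · exact hwa (t.anc_trans hwu h)
              · exact hwa h1
            · rintro (h | ⟨h1, h2⟩)
              · exact hwa (t.anc_trans hwu (t.anc_trans h hb))
              · exact hwa (t.anc_trans h1 hb)
  intro hreach
  have hnotPw : ∀ z, Reach t.ends S v z → ¬ P z := by
    intro z hz
    induction hz with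
    | refl =>
      rintro (h | ⟨h1, h2⟩)
      · exact huv (t.anc_antisymm ht h hvu)
      · exact h2 (t.anc_refl _)
    | tail h1 h2 ih =>
      obtain ⟨e, he, hee⟩ := h2
      have hiff := edgeP e he
      rcases hee with hee | hee <;> rw [hee] at hiff <;> dsimp only at hiff
      · exact fun h => ih (hiff.mpr h)
      · exact fun h => ih (hiff.mp h)
  exact hnotPw w hreach (Or.inr ⟨t.anc_refl _, fun h => hvw (t.anc_antisymm ht h hwv)⟩)

end DFSTree

end Helpers5
section Helpers6

variable {V E : Type} {t : DFSTree V E}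

namespace DFSTree

lemma not_cut_of_loop {ends : E → V × V} (h3 : GraphKConn ends 3) {e1 e2 e3 : E}
    (hl : (ends e1).1 = (ends e1).2) {x y : V} : Reach ends {e1, e2, e3} x y := by
  classical
  have h := h3 {e2, e3} ((Finset.card_insert_le _ _).trans_lt (by simp)) x y
  refine reach_weaken ?_ h
  intro e heS heT
  simp only [Finset.coe_insert, Finset.coe_singleton, Set.mem_insert_iff,
    Set.mem_singleton_iff] at heS heT
  push_neg at heT
  rcases heS with rfl | rfl | rfl
  · exact hl
  · exact absurd rfl heT.1
  · exact absurd rfl heT.2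

end DFSTree

end Helpers6
section Helpers7

variable {V E : Type} {t : DFSTree V E}

namespace DFSTree

lemma fwd_dir (ht : t.IsDFS) (h3 : GraphKConn t.ends 3) {u v w : V}
    (hu : u ≠ t.root) (hv : v ≠ t.root) (hw : w ≠ t.root)
    (huv : u ≠ v) (hvw : v ≠ w) (huw : u ≠ w)
    (hvu : t.Anc v u) (hwv : t.Anc w v)
    (hcut : IsCutSet t.ends {t.treeEdge u, t.treeEdge v, t.treeEdge w}) :
    t.B v = t.B u ∪ t.B w ∧ Disjoint (t.B u) (t.B w) := by
  classical
  set S : Set E := {t.treeEdge u, t.treeEdge v, t.treeEdge w} with hS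
  obtain ⟨x₀, y₀, hxy⟩ := hcut
  have hwu : t.Anc w u := t.anc_trans hwv hvu
  -- no self-loop tree edges at u, v, w
  have hpu : t.parent u ≠ u := by
    intro h
    exact hxy (not_cut_of_loop h3 (by rw [ht.tree_ends u hu, h]))
  have hpv : t.parent v ≠ v := by
    intro h
    have hperm : S = {t.treeEdge v, t.treeEdge u, t.treeEdge w} := Set.insert_comm _ _ _
    exact hxy (by rw [hperm]; exact not_cut_of_loop h3 (by rw [ht.tree_ends v hv, h]))
  have hpw : t.parent w ≠ w := by
    intro h
    have hperm : S = {t.treeEdge w, t.treeEdge u, t.treeEdge v} := by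
      rw [hS]
      ext x
      simp only [Set.mem_insert_iff, Set.mem_singleton_iff]
      tauto
    exact hxy (by rw [hperm]; exact not_cut_of_loop h3 (by rw [ht.tree_ends w hw, h]))
  set R : V → Prop := fun z => Reach t.ends S x₀ z with hR
  have Riff : ∀ a b : V, Reach t.ends S a b → (R a ↔ R b) := fun a b h =>
    ⟨fun h' => reach_trans h' h, fun h' => reach_trans h' (reach_symm h)⟩
  set Fb : Finset E := {t.treeEdge u, t.treeEdge v, t.treeEdge w} with hFb
  have hFbS : (↑Fb : Set E) = S := by
    rw [hS, hFb]; simp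
  have heuv : t.treeEdge u ≠ t.treeEdge v := fun h => huv (ht.treeEdge_inj u v hu hv h)
  have heuw : t.treeEdge u ≠ t.treeEdge w := fun h => huw (ht.treeEdge_inj u w hu hw h)
  have hevw : t.treeEdge v ≠ t.treeEdge w := fun h => hvw (ht.treeEdge_inj v w hv hw h)
  have hcard : Fb.card = 3 := by
    rw [hFb, Finset.card_insert_of_notMem (by simp [heuv, heuw]),
      Finset.card_insert_of_notMem (by simp [hevw]), Finset.card_singleton]
  set Tf : Finset E := Fb.filter (fun e => ¬ (R (t.ends e).1 ↔ R (t.ends e).2)) with hTf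
  have hTcard : ¬ Tf.card < 3 := by
    intro hlt
    have h := h3 Tf hlt x₀ y₀
    have key : ∀ z, Reach t.ends (↑Tf) x₀ z → R z := by
      intro z hz
      induction hz with
      | refl => exact Relation.ReflTransGen.refl
      | tail h1 h2 ih =>
        obtain ⟨e, he, hee⟩ := h2
        by_cases heS : e ∈ S
        · have heF : e ∈ Fb := by rw [← hFbS] at heS; exact_mod_cast heS
          have heT : e ∉ Tf := by
            intro h'; exact he (by exact_mod_cast h')
          have hiff : R (t.ends e).1 ↔ R (t.ends e).2 := by
            by_contra hc
            exact heT (Finset.mem_filter.mpr ⟨heF, hc⟩)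
          rcases hee with hee | hee <;> rw [hee] at hiff <;> dsimp only at hiff
          · exact hiff.mp ih
          · exact hiff.mpr ih
        · exact Relation.ReflTransGen.tail ih ⟨e, heS, hee⟩
    exact hxy (key y₀ h)
  have hTeq : Tf = Fb := by
    refine Finset.eq_of_subset_of_card_le (Finset.filter_subset _ _) ?_
    rw [hcard]
    exact not_lt.mp hTcard
  have cross : ∀ x : V, x ≠ t.root → t.treeEdge x ∈ Fb → ¬ (R x ↔ R (t.parent x)) := by
    intro x hx hmem
    have hm : t.treeEdge x ∈ Tf := hTeq ▸ hmem
    have h := (Finset.mem_filter.mp hm).2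
    rwa [ht.tree_ends x hx] at h
  have X1' : ¬ (R u ↔ R (t.parent u)) := cross u hu (by rw [hFb]; simp)
  have X2' : ¬ (R v ↔ R (t.parent v)) := cross v hv (by rw [hFb]; simp)
  have X3' : ¬ (R w ↔ R (t.parent w)) := cross w hw (by rw [hFb]; simp)
  -- representative reach lemmas
  have repD : ∀ z, t.Anc u z → (R z ↔ R u) := fun z h =>
    Riff _ _ (t.reachD ht hu hv hw huv hvw huw hvu hwv z h)
  have repC : ∀ z, t.Anc v z → ¬ t.Anc u z → (R z ↔ R v) := fun z h h' =>
    Riff _ _ (t.reachC ht hu hv hw huv hvw huw hvu hwv z h h')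
  have repB : ∀ z, t.Anc w z → ¬ t.Anc v z → (R z ↔ R w) := fun z h h' =>
    Riff _ _ (t.reachB ht hu hv hw huv hvw huw hvu hwv z h h')
  have repA : ∀ z, ¬ t.Anc w z → (R z ↔ R t.root) := fun z h =>
    Riff _ _ (t.reachA ht hu hv hw huv hvw huw hvu hwv z h)
  -- positions of the parents
  have hpuv : t.Anc v (t.parent u) := t.anc_step hvu huv
  have hpuu : ¬ t.Anc u (t.parent u) := fun h => hpu (anc_antisymm ht (t.anc_parent hu) h)
  have X1 : ¬ (R u ↔ R v) := fun h => X1' (h.trans (repC _ hpuv hpuu).symm)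
  have hpvw : t.Anc w (t.parent v) := t.anc_step hwv hvw
  have hpvv : ¬ t.Anc v (t.parent v) := fun h => hpv (anc_antisymm ht (t.anc_parent hv) h)
  have X2 : ¬ (R v ↔ R w) := fun h => X2' (h.trans (repB _ hpvw hpvv).symm)
  have hpww : ¬ t.Anc w (t.parent w) := fun h => hpw (anc_antisymm ht (t.anc_parent hw) h)
  have X3 : ¬ (R w ↔ R t.root) := fun h => X3' (h.trans (repA _ hpww).symm)
  -- single back-edge step
  have estep : ∀ e, ¬ t.IsTreeEdge e → (R (t.ends e).1 ↔ R (t.ends e).2) := by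
    intro e hte
    have heS : e ∉ S := by
      intro h
      rw [hS] at h
      rcases h with h | h | h
      · exact hte ⟨u, hu, h⟩
      · exact hte ⟨v, hv, h⟩
      · exact hte ⟨w, hw, h⟩
    exact Riff _ _ (Relation.ReflTransGen.single ⟨e, heS, Or.inl Prod.mk.eta.symm⟩)
  -- excluded back-edge classes
  have hnoDC : ∀ e, ¬ t.IsTreeEdge e → t.Anc u (t.ends e).1 →
      t.Anc v (t.ends e).2 → ¬ t.Anc u (t.ends e).2 → False := by
    intro e hte h1 h2 h3'
    exact X1 ((repD _ h1).symm.trans ((estep e hte).trans (repC _ h2 h3')))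
  have hnoDA : ∀ e, ¬ t.IsTreeEdge e → t.Anc u (t.ends e).1 →
      ¬ t.Anc w (t.ends e).2 → False := by
    intro e hte h1 h2
    have h := (repD _ h1).symm.trans ((estep e hte).trans (repA _ h2))
    by_cases hru : R u
    · have hrr : R t.root := h.mp hru
      have hrw : ¬ R w := fun h' => X3 (iff_of_true h' hrr)
      have hrv : R v := by
        by_contra h'
        exact X2 (iff_of_false h' hrw)
      exact X1 (iff_of_true hru hrv)
    · have hrr : ¬ R t.root := fun h' => hru (h.mpr h')
      have hrw : R w := by
        by_contra h'
        exact X3 (iff_of_false h' hrr)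
      have hrv : ¬ R v := fun h' => X2 (iff_of_true h' hrw)
      exact X1 (iff_of_false hru hrv)
  have hnoCB : ∀ e, ¬ t.IsTreeEdge e → t.Anc v (t.ends e).1 → ¬ t.Anc u (t.ends e).1 →
      t.Anc w (t.ends e).2 → ¬ t.Anc v (t.ends e).2 → False := by
    intro e hte h1 h1' h2 h2'
    exact X2 ((repC _ h1 h1').symm.trans ((estep e hte).trans (repB _ h2 h2')))
  have hnoBA : ∀ e, ¬ t.IsTreeEdge e → t.Anc w (t.ends e).1 → ¬ t.Anc v (t.ends e).1 →
      ¬ t.Anc w (t.ends e).2 → False := by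
    intro e hte h1 h1' h2
    exact X3 ((repB _ h1 h1').symm.trans ((estep e hte).trans (repA _ h2)))
  -- now the set-theoretic conclusions
  have sub1 : t.B v ⊆ t.B u ∪ t.B w := by
    rintro e ⟨hte, hva, hbv, hbne⟩
    by_cases hua : t.Anc u (t.ends e).1
    · refine Or.inl ⟨hte, hua, t.anc_trans hbv hvu, ?_⟩
      rintro hbu
      rw [hbu] at hbv
      exact huv (t.anc_antisymm ht hbv hvu)
    · refine Or.inr ⟨hte, t.anc_trans hwv hva, ?_⟩
      have hnvb : ¬ t.Anc v (t.ends e).2 := fun h => hbne (t.anc_antisymm ht hbv h)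
      rcases t.anc_total hbv hwv with h | h
      · refine ⟨h, ?_⟩
        rintro hbw
        rw [hbw] at hnvb
        exact hnoCB e hte hva hua (hbw ▸ t.anc_refl _) (hbw ▸ hnvb)
      · exact (hnoCB e hte hva hua h hnvb).elim
  have sub2 : t.B u ⊆ t.B v := by
    rintro e ⟨hte, hua, hbu, hbne⟩
    refine ⟨hte, t.anc_trans hvu hua, ?_⟩
    by_cases hvb : t.Anc v (t.ends e).2
    · have hub : ¬ t.Anc u (t.ends e).2 := fun h => hbne (t.anc_antisymm ht hbu h)
      exact (hnoDC e hte hua hvb hub).elim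
    · rcases t.anc_total hbu hvu with h | h
      · refine ⟨h, ?_⟩
        rintro hbv
        exact hvb (hbv ▸ t.anc_refl _)
      · exact absurd h hvb
  have sub3 : t.B w ⊆ t.B v := by
    rintro e ⟨hte, hwa, hbw, hbne⟩
    have hbv : t.Anc (t.ends e).2 v := t.anc_trans hbw hwv
    have hbvne : (t.ends e).2 ≠ v := by
      rintro hb
      rw [hb] at hbw
      exact hvw (t.anc_antisymm ht hbw hwv)
    refine ⟨hte, ?_, hbv, hbvne⟩
    by_contra hnva
    have hnwb : ¬ t.Anc w (t.ends e).2 := fun h => hbne (t.anc_antisymm ht hbw h)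
    exact hnoBA e hte hwa hnva hnwb
  have hdisj : Disjoint (t.B u) (t.B w) := by
    rw [Set.disjoint_left]
    rintro e ⟨hte, hua, -, -⟩ ⟨-, -, hbw, hbne⟩
    have hnwb : ¬ t.Anc w (t.ends e).2 := fun h => hbne (t.anc_antisymm ht hbw h)
    exact hnoDA e hte hua hnwb
  exact ⟨Set.Subset.antisymm sub1 (Set.union_subset sub2 sub3), hdisj⟩

end DFSTree

end Helpers7
/-- Let `u` be a descendant of `v` and `v` a descendant of `w` (all distinct, `≠ r`).
Then `{(u, p(u)), (v, p(v)), (w, p(w))}` is a 3-edge cut iff `B(v) = B(u) ⊔ B(w)`. -/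
theorem cut_three_tree_edges_nested (t : DFSTree V E) (ht : t.IsDFS)
    (h3 : GraphKConn t.ends 3) (u v w : V)
    (hu : u ≠ t.root) (hv : v ≠ t.root) (hw : w ≠ t.root)
    (huv : u ≠ v) (hvw : v ≠ w) (huw : u ≠ w)
    (hvu : t.Anc v u) (hwv : t.Anc w v) :
    IsCutSet t.ends {t.treeEdge u, t.treeEdge v, t.treeEdge w} ↔
      (t.B v = t.B u ∪ t.B w ∧ Disjoint (t.B u) (t.B w)) := by
  constructor
  · intro hcut
    exact t.fwd_dir ht h3 hu hv hw huv hvw huw hvu hwv hcut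
  · rintro ⟨hcond, hdisj⟩
    exact ⟨v, w, t.rev_dir ht hu hv hw huv hvw huw hvu hwv hcond hdisj⟩
end

section
/- In a 3-edge-connected graph G with DFS tree T, for any two tree-edges (u,p(u)) and (v,p(v)) there is at most one vertex w such that {(u,p(u)), (v,p(v)), (w,p(w))} is a 3-edge cut of G. -/
variable {V E : Type}

section Aux

variable {ends : E → V × V}

/-- An edge `e` crosses the vertex set (predicate) `P`. -/
def Cross (ends : E → V × V) (P : V → Prop) (e : E) : Prop :=
  ¬ (P (ends e).1 ↔ P (ends e).2)

lemma reach_invariant {S : Set E} {P : V → Prop}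
    (hP : ∀ e, e ∉ S → ∀ x y : V, (ends e = (x, y) ∨ ends e = (y, x)) → P x → P y)
    {a b : V} (h : Reach ends S a b) (ha : P a) : P b := by
  induction h with
  | refl => exact ha
  | tail _ hstep ih =>
      obtain ⟨e, he, ho⟩ := hstep
      exact hP e he _ _ ho ih

lemma not_cross_reach {S : Set E} {a : V} {e : E} (he : e ∉ S) :
    ¬ Cross ends (Reach ends S a) e := by
  intro h
  apply h
  constructor
  · intro hx
    exact hx.tail ⟨e, he, Or.inl Prod.mk.eta.symm⟩
  · intro hx
    exact hx.tail ⟨e, he, Or.inr Prod.mk.eta.symm⟩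

lemma pair_card_lt [DecidableEq E] (f g : E) : ({f, g} : Finset E).card < 3 := by
  have h := Finset.card_insert_le f ({g} : Finset E)
  simp at h
  omega

lemma cross_of_cut [DecidableEq E] {e1 e2 e3 : E} {a b : V}
    (h3 : GraphKConn ends 3)
    (hcut : ¬ Reach ends ({e1, e2, e3} : Set E) a b) :
    Cross ends (Reach ends ({e1, e2, e3} : Set E) a) e3 := by
  by_contra hnc
  apply hcut
  have hnc' : Reach ends ({e1, e2, e3} : Set E) a (ends e3).1 ↔
      Reach ends ({e1, e2, e3} : Set E) a (ends e3).2 := not_not.mp hnc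
  have hR : Reach ends (↑({e1, e2} : Finset E)) a b :=
    h3 _ (pair_card_lt e1 e2) a b
  refine reach_invariant (P := Reach ends ({e1, e2, e3} : Set E) a) ?_ hR .refl
  intro e he x y ho hx
  simp only [Finset.coe_insert, Finset.coe_singleton, Set.mem_insert_iff,
    Set.mem_singleton_iff, not_or] at he
  by_cases he3 : e = e3
  · subst he3
    rcases ho with h | h <;> rw [h] at hnc' <;> simp at hnc' <;> tauto
  · refine hx.tail ⟨e, ?_, ho⟩
    simp only [Set.mem_insert_iff, Set.mem_singleton_iff]
    tauto

lemma no_pair_cut [DecidableEq E] (h3 : GraphKConn ends 3) (f g : E) :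
    ¬ IsCutSet ends ({f, g} : Set E) := by
  rintro ⟨x, y, hxy⟩
  apply hxy
  have := h3 ({f, g} : Finset E) (pair_card_lt f g) x y
  simpa using this


lemma triple_eq_pair {f g h : E} (hfg : h = f ∨ h = g) :
    ({f, g, h} : Set E) = ({f, g} : Set E) := by
  rcases hfg with rfl | rfl <;>
    · ext x
      simp only [Set.mem_insert_iff, Set.mem_singleton_iff]
      tauto

lemma unique_third_edge_aux [DecidableEq E] (h3 : GraphKConn ends 3)
    {eu ev ew ew' : E} (hne : ew ≠ ew') {a b a' b' : V}
    (hab : ¬ Reach ends ({eu, ev, ew} : Set E) a b)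
    (hab' : ¬ Reach ends ({eu, ev, ew'} : Set E) a' b') : False := by
  have hwu : ew ≠ eu := by
    intro h
    exact no_pair_cut h3 eu ev ⟨a, b, by rwa [triple_eq_pair (Or.inl h)] at hab⟩
  have hwv : ew ≠ ev := by
    intro h
    exact no_pair_cut h3 eu ev ⟨a, b, by rwa [triple_eq_pair (Or.inr h)] at hab⟩
  -- crossing facts
  have cwX : Cross ends (Reach ends ({eu, ev, ew} : Set E) a) ew :=
    cross_of_cut h3 hab
  have cuX : Cross ends (Reach ends ({eu, ev, ew} : Set E) a) eu := by
    have hperm : ({eu, ev, ew} : Set E) = ({ev, ew, eu} : Set E) := by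
      ext x; simp only [Set.mem_insert_iff, Set.mem_singleton_iff]; tauto
    rw [hperm]
    exact cross_of_cut h3 (hperm ▸ hab)
  have cvX : Cross ends (Reach ends ({eu, ev, ew} : Set E) a) ev := by
    have hperm : ({eu, ev, ew} : Set E) = ({ew, eu, ev} : Set E) := by
      ext x; simp only [Set.mem_insert_iff, Set.mem_singleton_iff]; tauto
    rw [hperm]
    exact cross_of_cut h3 (hperm ▸ hab)
  have cuY : Cross ends (Reach ends ({eu, ev, ew'} : Set E) a') eu := by
    have hperm : ({eu, ev, ew'} : Set E) = ({ev, ew', eu} : Set E) := by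
      ext x; simp only [Set.mem_insert_iff, Set.mem_singleton_iff]; tauto
    rw [hperm]
    exact cross_of_cut h3 (hperm ▸ hab')
  have cvY : Cross ends (Reach ends ({eu, ev, ew'} : Set E) a') ev := by
    have hperm : ({eu, ev, ew'} : Set E) = ({ew', eu, ev} : Set E) := by
      ext x; simp only [Set.mem_insert_iff, Set.mem_singleton_iff]; tauto
    rw [hperm]
    exact cross_of_cut h3 (hperm ▸ hab')
  have nwY : ¬ Cross ends (Reach ends ({eu, ev, ew'} : Set E) a') ew :=
    not_cross_reach (by
      simp only [Set.mem_insert_iff, Set.mem_singleton_iff]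
      tauto)
  -- `P x := (PX x ↔ PY x)` is preserved by every edge other than `ew`, `ew'`
  have hpres : ∀ e, e ∉ (↑({ew, ew'} : Finset E) : Set E) → ∀ x y : V,
      (ends e = (x, y) ∨ ends e = (y, x)) →
      ((Reach ends ({eu, ev, ew} : Set E) a x ↔ Reach ends ({eu, ev, ew'} : Set E) a' x)) →
      ((Reach ends ({eu, ev, ew} : Set E) a y ↔ Reach ends ({eu, ev, ew'} : Set E) a' y)) := by
    intro e he x y ho hxy
    simp only [Finset.coe_insert, Finset.coe_singleton, Set.mem_insert_iff,
      Set.mem_singleton_iff, not_or] at he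
    by_cases heu' : e = eu
    · subst heu'
      simp only [Cross] at cuX cuY
      rcases ho with h | h <;> rw [h] at cuX cuY <;> dsimp only at cuX cuY <;> tauto
    by_cases hev' : e = ev
    · subst hev'
      simp only [Cross] at cvX cvY
      rcases ho with h | h <;> rw [h] at cvX cvY <;> dsimp only at cvX cvY <;> tauto
    · have heS : e ∉ ({eu, ev, ew} : Set E) := by
        simp only [Set.mem_insert_iff, Set.mem_singleton_iff]; tauto
      have heS' : e ∉ ({eu, ev, ew'} : Set E) := by
        simp only [Set.mem_insert_iff, Set.mem_singleton_iff]; tauto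
      have nX := not_cross_reach (ends := ends) (a := a) heS
      have nY := not_cross_reach (ends := ends) (a := a') heS'
      simp only [Cross, not_not] at nX nY
      rcases ho with h | h <;> rw [h] at nX nY <;> dsimp only at nX nY <;> tauto
  have hconst : ∀ x y : V,
      ((Reach ends ({eu, ev, ew} : Set E) a x ↔ Reach ends ({eu, ev, ew'} : Set E) a' x)) →
      ((Reach ends ({eu, ev, ew} : Set E) a y ↔ Reach ends ({eu, ev, ew'} : Set E) a' y)) := by
    intro x y hx
    exact reach_invariant hpres (h3 ({ew, ew'} : Finset E) (pair_card_lt ew ew') x y) hx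
  have h12 : ((Reach ends ({eu, ev, ew} : Set E) a (ends ew).1 ↔
        Reach ends ({eu, ev, ew'} : Set E) a' (ends ew).1)) ↔
      ((Reach ends ({eu, ev, ew} : Set E) a (ends ew).2 ↔
        Reach ends ({eu, ev, ew'} : Set E) a' (ends ew).2)) :=
    ⟨hconst _ _, hconst _ _⟩
  simp only [Cross, not_not] at cwX nwY
  tauto

end Aux

/-- For any two tree edges `(u, p(u))` and `(v, p(v))` of a 3-edge-connected graph,
there is at most one vertex `w` such that `{(u, p(u)), (v, p(v)), (w, p(w))}` is a
3-edge cut. -/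
theorem unique_third_tree_edge (t : DFSTree V E) (ht : t.IsDFS)
    (h3 : GraphKConn t.ends 3) (u v : V)
    (hu : u ≠ t.root) (hv : v ≠ t.root) :
    ∀ w w' : V, w ≠ t.root → w' ≠ t.root →
      IsCutSet t.ends {t.treeEdge u, t.treeEdge v, t.treeEdge w} →
      IsCutSet t.ends {t.treeEdge u, t.treeEdge v, t.treeEdge w'} → w = w' := by
  classical
  intro w w' hw hw' hc hc'
  by_contra hne
  obtain ⟨a, b, hab⟩ := hc
  obtain ⟨a', b', hab'⟩ := hc'
  exact unique_third_edge_aux h3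
    (fun h => hne (ht.treeEdge_inj w w' hw hw' h)) hab hab'
end

section
/- Let T be a DFS tree of a connected graph G, and let u' be an ancestor of u with high(u) = high(u'). Then B(u) ⊆ B(u'), and consequently low(u') ≤ low(u). -/
variable {V E : Type}

theorem anc_comparable (t : DFSTree V E) {u a b : V} (ha : t.Anc a u) (hb : t.Anc b u) :
    t.Anc a b ∨ t.Anc b a := by
  unfold DFSTree.Anc at *
  induction ha using Relation.ReflTransGen.head_induction_on generalizing b with
  | refl => exact Or.inr hb
  | head h' hca ih =>
    rcases Relation.ReflTransGen.cases_head hb with rfl | ⟨c', hc', hb'⟩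
    · exact Or.inl (Relation.ReflTransGen.head h' hca)
    · have : c' = _ := hc'.2.trans h'.2.symm
      exact ih (this ▸ hb')

/-- If `u'` is an ancestor of `u` with `high(u) = high(u')`, then `B(u) ⊆ B(u')`
and consequently `low(u') ≤ low(u)`. -/
theorem high_eq_imp_B_subset_and_low_le (t : DFSTree V E) (ht : t.IsDFS)
    (u u' h l l' : V) (hanc : t.Anc u' u)
    (hH : t.IsHigh u h) (hH' : t.IsHigh u' h)
    (hL : t.IsLow u l) (hL' : t.IsLow u' l') :
    t.B u ⊆ t.B u' ∧ t.pre l' ≤ t.pre l := by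
  have hsub : t.B u ⊆ t.B u' := by
    intro e he
    obtain ⟨hnt, hx, hy, hne⟩ := he
    -- y := (t.ends e).2 is a proper ancestor of u
    have hyu : t.Anc (t.ends e).2 u := hy
    have hcomp := anc_comparable t hyu hanc
    -- rule out t.Anc u' (t.ends e).2
    have hnot : ¬ t.Anc u' (t.ends e).2 := by
      intro hu'y
      have h1 : t.pre u' ≤ t.pre (t.ends e).2 := ht.pre_mono _ _ hu'y
      have h2 : t.pre (t.ends e).2 ≤ t.pre h := hH.2 e ⟨hnt, hx, hy, hne⟩
      obtain ⟨e', he', hhe'⟩ := hH'.1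
      have h3 : t.pre h ≤ t.pre u' := hhe' ▸ ht.pre_mono _ _ he'.2.2.1
      have h4 : t.pre h ≠ t.pre u' := fun hpe => he'.2.2.2 (hhe' ▸ ht.pre_inj hpe)
      omega
    rcases hcomp with hyu' | hu'y
    · refine ⟨hnt, hx.trans hanc, hyu', ?_⟩
      rintro rfl
      exact hnot Relation.ReflTransGen.refl
    · exact absurd hu'y hnot
  refine ⟨hsub, ?_⟩
  obtain ⟨e, he, hle⟩ := hL.1
  calc t.pre l' ≤ t.pre (t.ends e).2 := hL'.2 e (hsub he)
    _ = t.pre l := by rw [hle]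
end

section
/- Let G be a 3-edge-connected graph, let C = {e1, e2, e3} be a 3-edge cut of G, and let G' be the graph obtained from G by removing e1, e2, e3 and adding two new vertices x, y together with edges joining y to the three endpoints of e1, e2, e3 lying in one component of G \ C, and joining x to the three endpoints lying in the other component. Then two original vertices a, b of G are 4-edge-connected in G if and only if they lie in the same connected component of G' and are 4-edge-connected in that component. -/
variable {V E : Type}

/-- The split graph at the 3-edge cut `{e1, e2, e3}`: the edges `e1, e2, e3` are
removed, and two new vertices `x = Sum.inr false` and `y = Sum.inr true` are added,
with edges joining `y` to the endpoints `a1, a2, a3` (those in one component of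
`G \ C`) and `x` to the endpoints `b1, b2, b3` (those in the other component). -/
def splitEnds [DecidableEq E] (ends : E → V × V) (e1 e2 e3 : E)
    (a1 a2 a3 b1 b2 b3 : V) : E ⊕ Fin 3 → (V ⊕ Bool) × (V ⊕ Bool)
  | .inl e =>
      if e = e1 then (.inl a1, .inr true)
      else if e = e2 then (.inl a2, .inr true)
      else if e = e3 then (.inl a3, .inr true)
      else (.inl (ends e).1, .inl (ends e).2)
  | .inr i => (.inr false, .inl (if i = 0 then b1 else if i = 1 then b2 else b3))

lemma Reach.symm {ends : E → V × V} {S : Set E} {u v : V} (h : Reach ends S u v) :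
    Reach ends S v u := by
  refine @Std.Symm.symm _ _ (@Relation.ReflTransGen.stdSymm _
    (fun a b => ∃ e, e ∉ S ∧ (ends e = (a, b) ∨ ends e = (b, a))) ⟨?_⟩) _ _ h
  rintro a b ⟨e, he, h1 | h1⟩
  exacts [⟨e, he, Or.inr h1⟩, ⟨e, he, Or.inl h1⟩]

lemma Reach.mono {ends : E → V × V} {S T : Set E} (hST : S ⊆ T) {u v : V}
    (h : Reach ends T u v) : Reach ends S u v := by
  refine Relation.ReflTransGen.mono ?_ _ _ h
  rintro a b ⟨e, he, h1⟩
  exact ⟨e, fun hc => he (hST hc), h1⟩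

lemma reach_inv {ends : E → V × V} {S : Set E} (P : V → Prop)
    (hP : ∀ e ∉ S, (P (ends e).1 ↔ P (ends e).2)) {u v : V}
    (h : Reach ends S u v) : P u ↔ P v := by
  induction h with
  | refl => rfl
  | tail _ step ih =>
    obtain ⟨e, he, h1 | h1⟩ := step
    · rw [ih]; have := hP e he; rw [h1] at this; exact this
    · rw [ih]; have := hP e he; rw [h1] at this; exact this.symm

lemma Reach.tail' {ends : E → V × V} {S : Set E} {u v w : V} (h : Reach ends S u v)
    (e : E) (he : e ∉ S) (hor : ends e = (v, w) ∨ ends e = (w, v)) :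
    Reach ends S u w :=
  Relation.ReflTransGen.tail h ⟨e, he, hor⟩

lemma reach_transfer {ends : E → V × V} {S T : Set E} (P : V → Prop)
    (hstep : ∀ e ∉ T, (P (ends e).1 ∨ P (ends e).2) →
      (P (ends e).1 ∧ P (ends e).2) ∧ e ∉ S) {u v : V}
    (hu : P u) (h : Reach ends T u v) : Reach ends S u v ∧ P v := by
  induction h with
  | refl => exact ⟨Relation.ReflTransGen.refl, hu⟩
  | tail _ step ih =>
    obtain ⟨e, he, h1 | h1⟩ := step
    · have := hstep e he (by rw [h1]; exact Or.inl ih.2)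
      rw [h1] at this
      exact ⟨ih.1.tail' e this.2 (Or.inl h1), this.1.2⟩
    · have := hstep e he (by rw [h1]; exact Or.inr ih.2)
      rw [h1] at this
      exact ⟨ih.1.tail' e this.2 (Or.inr h1), this.1.1⟩

lemma maj_not_two {p q r M : Prop} (hM : M ↔ ((p ∧ q) ∨ (p ∧ r) ∨ (q ∧ r))) :
    (¬(¬(p ↔ M) ∧ ¬(q ↔ M))) ∧ (¬(¬(p ↔ M) ∧ ¬(r ↔ M))) ∧ (¬(¬(q ↔ M) ∧ ¬(r ↔ M))) := by
  tauto

lemma maj_uniform {p q r M : Prop} (hM : M ↔ ((p ∧ q) ∨ (p ∧ r) ∨ (q ∧ r)))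
    (hpq : p ↔ q) (hqr : q ↔ r) : (p ↔ M) ∧ (q ↔ M) ∧ (r ↔ M) := by
  tauto

set_option maxHeartbeats 2000000 in
/-- Two original vertices `a, b` of a 3-edge-connected graph `G` are
4-edge-connected in `G` iff they lie in the same connected component of the split
graph `G'` at a 3-edge cut `C = {e1, e2, e3}` and are 4-edge-connected there. -/
theorem four_edge_connected_iff_in_split_graph [DecidableEq E]
    (ends : E → V × V) (h3 : GraphKConn ends 3)
    (e1 e2 e3 : E) (h12 : e1 ≠ e2) (h13 : e1 ≠ e3) (h23 : e2 ≠ e3)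
    (hcut : IsCutSet ends {e1, e2, e3})
    (a1 a2 a3 b1 b2 b3 : V)
    (hends1 : ends e1 = (a1, b1)) (hends2 : ends e2 = (a2, b2))
    (hends3 : ends e3 = (a3, b3))
    (hA12 : Reach ends {e1, e2, e3} a1 a2) (hA13 : Reach ends {e1, e2, e3} a1 a3)
    (hB12 : Reach ends {e1, e2, e3} b1 b2) (hB13 : Reach ends {e1, e2, e3} b1 b3)
    (hsep : ¬ Reach ends {e1, e2, e3} a1 b1) :
    ∀ a b : V,
      KConn ends 4 a b ↔
        (Reach (splitEnds ends e1 e2 e3 a1 a2 a3 b1 b2 b3) ∅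
            (Sum.inl a) (Sum.inl b) ∧
          KConn (splitEnds ends e1 e2 e3 a1 a2 a3 b1 b2 b3) 4
            (Sum.inl a) (Sum.inl b)) := by
  classical
  set G' := splitEnds ends e1 e2 e3 a1 a2 a3 b1 b2 b3 with hG'def
  -- basic endpoint computations in G'
  have hsp1 : G' (.inl e1) = (.inl a1, .inr true) := by simp [hG'def, splitEnds]
  have hsp2 : G' (.inl e2) = (.inl a2, .inr true) := by
    simp [hG'def, splitEnds, h12.symm]
  have hsp3 : G' (.inl e3) = (.inl a3, .inr true) := by
    simp [hG'def, splitEnds, h13.symm, h23.symm]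
  have hspE : ∀ e : E, e ≠ e1 → e ≠ e2 → e ≠ e3 →
      G' (.inl e) = (.inl (ends e).1, .inl (ends e).2) := by
    intro e u1 u2 u3; simp [hG'def, splitEnds, u1, u2, u3]
  have hsr0 : G' (.inr 0) = (.inr false, .inl b1) := by simp [hG'def, splitEnds]
  have hsr1 : G' (.inr 1) = (.inr false, .inl b2) := by simp [hG'def, splitEnds]
  have hsr2 : G' (.inr 2) = (.inr false, .inl b3) := by
    simp [hG'def, splitEnds]
  -- side facts in G
  have hCmem : ∀ e : E, e ∈ ({e1, e2, e3} : Set E) ↔ (e = e1 ∨ e = e2 ∨ e = e3) := by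
    intro e; simp
  have hstep1 : ∀ e : E, e ∉ ({e1, e2, e3} : Set E) →
      Reach ends {e1, e2, e3} (ends e).1 (ends e).2 :=
    fun e he => Relation.ReflTransGen.single ⟨e, he, Or.inl rfl⟩
  have hdisj : ∀ v : V, Reach ends {e1, e2, e3} a1 v →
      Reach ends {e1, e2, e3} b1 v → False :=
    fun v h h' => hsep (h.trans h'.symm)
  have hsideA : ∀ e : E, e ∉ ({e1, e2, e3} : Set E) →
      (Reach ends {e1, e2, e3} a1 (ends e).1 ↔ Reach ends {e1, e2, e3} a1 (ends e).2) :=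
    fun e he => ⟨fun h => h.trans (hstep1 e he), fun h => h.trans (hstep1 e he).symm⟩
  have hsideB : ∀ e : E, e ∉ ({e1, e2, e3} : Set E) →
      (Reach ends {e1, e2, e3} b1 (ends e).1 ↔ Reach ends {e1, e2, e3} b1 (ends e).2) :=
    fun e he => ⟨fun h => h.trans (hstep1 e he), fun h => h.trans (hstep1 e he).symm⟩
  have hcover : ∀ v : V, Reach ends {e1, e2, e3} a1 v ∨ Reach ends {e1, e2, e3} b1 v := by
    have hcstep : ∀ u w : V,
        (∃ e, e ∉ ({e2, e3} : Set E) ∧ (ends e = (u, w) ∨ ends e = (w, u))) →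
        (Reach ends {e1, e2, e3} a1 u ∨ Reach ends {e1, e2, e3} b1 u) →
        (Reach ends {e1, e2, e3} a1 w ∨ Reach ends {e1, e2, e3} b1 w) := by
      rintro u w ⟨e, he, hor⟩ ih
      by_cases he1 : e = e1
      · rw [he1, hends1] at hor
        rcases hor with h | h <;> simp only [Prod.mk.injEq] at h
        · right; rw [← h.2]; exact Relation.ReflTransGen.refl
        · left; rw [← h.1]; exact Relation.ReflTransGen.refl
      · have heC : e ∉ ({e1, e2, e3} : Set E) := by
          simp only [Set.mem_insert_iff, Set.mem_singleton_iff] at he ⊢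
          push_neg at he ⊢
          exact ⟨he1, he.1, he.2⟩
        rcases ih with h | h
        · exact Or.inl (h.tail' e heC hor)
        · exact Or.inr (h.tail' e heC hor)
    intro v
    have hcard : ({e2, e3} : Finset E).card < 3 := by
      have : ({e2, e3} : Finset E).card ≤ 2 := Finset.card_insert_le _ _ |>.trans (by simp)
      omega
    have h2 := h3 {e2, e3} hcard a1 v
    have hcoe : (↑({e2, e3} : Finset E) : Set E) = {e2, e3} := by simp
    rw [hcoe] at h2
    induction h2 with
    | refl => exact Or.inl Relation.ReflTransGen.refl
    | tail _ step ih => exact hcstep _ _ step ih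
  have hnb : ∀ v : V, Reach ends {e1, e2, e3} b1 v → ¬ Reach ends {e1, e2, e3} a1 v :=
    fun v h h' => hdisj v h' h
  set QA : V ⊕ Bool → Prop :=
    Sum.elim (fun v => Reach ends {e1, e2, e3} a1 v) (fun t => t = true) with hQAdef
  have hQA : ∀ g : E ⊕ Fin 3, (QA (G' g).1 ↔ QA (G' g).2) := by
    intro g
    match g with
    | .inl e =>
      by_cases hc1 : e = e1
      · rw [hc1, hsp1]; exact iff_of_true Relation.ReflTransGen.refl rfl
      by_cases hc2 : e = e2
      · rw [hc2, hsp2]; exact iff_of_true hA12 rfl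
      by_cases hc3 : e = e3
      · rw [hc3, hsp3]; exact iff_of_true hA13 rfl
      · rw [hspE e hc1 hc2 hc3]
        exact hsideA e (by rw [hCmem]; push_neg; exact ⟨hc1, hc2, hc3⟩)
    | .inr j =>
      fin_cases j
      · exact hsr0 ▸ iff_of_false (by simp [hQAdef]) hsep
      · exact hsr1 ▸ iff_of_false (by simp [hQAdef]) (hnb b2 hB12)
      · exact hsr2 ▸ iff_of_false (by simp [hQAdef]) (hnb b3 hB13)
  have hlift : ∀ u v : V, Reach ends {e1, e2, e3} u v →
      Reach G' ∅ (Sum.inl u) (Sum.inl v) := by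
    intro u v h
    induction h with
    | refl => exact Relation.ReflTransGen.refl
    | tail _ step ih =>
      obtain ⟨e, he, hor⟩ := step
      rw [hCmem] at he; push_neg at he
      have hsp := hspE e he.1 he.2.1 he.2.2
      refine ih.tail' (Sum.inl e) (Set.notMem_empty _) ?_
      rcases hor with h1 | h1 <;> rw [h1] at hsp
      · exact Or.inl hsp
      · exact Or.inr hsp
  intro a b
  constructor
  · -- forward direction
    intro h4
    have hcard3 : ({e1, e2, e3} : Finset E).card ≤ 3 := by
      have h1 := Finset.card_insert_le e1 ({e2, e3} : Finset E)
      have h2 := Finset.card_insert_le e2 ({e3} : Finset E)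
      have h3' : ({e3} : Finset E).card = 1 := Finset.card_singleton _
      omega
    have hab : Reach ends {e1, e2, e3} a b := by
      have := h4 ({e1, e2, e3} : Finset E) hcard3
      have hCF : ((({e1, e2, e3} : Finset E) : Set E)) = ({e1, e2, e3} : Set E) := by simp
      rwa [hCF] at this
    refine ⟨hlift a b hab, ?_⟩
    intro S' hS'
    by_contra hnot
    have cutback : ∀ c d : V, ¬ Reach G' ↑S' (Sum.inl c) (Sum.inl d) →
        ¬ Reach G' ↑S' (Sum.inl c) (Sum.inr true) →
        ¬ Reach G' ↑S' (Sum.inl c) (Sum.inr false) →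
        (∀ T : Finset E, T.card ≤ 3 → Reach ends ↑T c d) → False := by
      intro c d hncd hy hx hrr
      set f : E ⊕ Fin 3 → E :=
        Sum.elim id (fun j => if j = 0 then e1 else if j = 1 then e2 else e3) with hf
      have hrc := hrr (S'.image f) (le_trans Finset.card_image_le hS')
      have hstepcl : ∀ g : E ⊕ Fin 3, g ∉ (↑S' : Set (E ⊕ Fin 3)) → ∀ z w, G' g = (z, w) →
          (Reach G' ↑S' (Sum.inl c) z ↔ Reach G' ↑S' (Sum.inl c) w) := by
        intro g hg z w hzw
        exact ⟨fun h => h.tail' g hg (Or.inl hzw), fun h => h.tail' g hg (Or.inr hzw)⟩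
      have hnmem : ∀ e : E, e ∉ (↑(S'.image f) : Set E) → ∀ g ∈ S', f g ≠ e := by
        intro e he g hg hfg
        exact he (Finset.mem_coe.mpr (Finset.mem_image.mpr ⟨g, hg, hfg⟩))
      have key : ∀ e, e ∉ (↑(S'.image f) : Set E) →
          (Reach G' ↑S' (Sum.inl c) (Sum.inl (ends e).1) ↔
           Reach G' ↑S' (Sum.inl c) (Sum.inl (ends e).2)) := by
        intro e he
        have hne := hnmem e he
        by_cases hc1 : e = e1
        · have hg1 : Sum.inl e1 ∉ (↑S' : Set (E ⊕ Fin 3)) :=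
            fun h => hne _ (Finset.mem_coe.mp h) (by simp [hf, hc1])
          have hg2 : Sum.inr (0 : Fin 3) ∉ (↑S' : Set (E ⊕ Fin 3)) :=
            fun h => hne _ (Finset.mem_coe.mp h) (by simp [hf, hc1])
          have hA1 : ¬ Reach G' ↑S' (Sum.inl c) (Sum.inl a1) :=
            fun h => hy ((hstepcl _ hg1 _ _ hsp1).mp h)
          have hB1 : ¬ Reach G' ↑S' (Sum.inl c) (Sum.inl b1) :=
            fun h => hx ((hstepcl _ hg2 _ _ hsr0).mpr h)
          rw [hc1, hends1]
          exact iff_of_false hA1 hB1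
        by_cases hc2 : e = e2
        · have hg1 : Sum.inl e2 ∉ (↑S' : Set (E ⊕ Fin 3)) :=
            fun h => hne _ (Finset.mem_coe.mp h) (by simp [hf, hc2])
          have hg2 : Sum.inr (1 : Fin 3) ∉ (↑S' : Set (E ⊕ Fin 3)) :=
            fun h => hne _ (Finset.mem_coe.mp h) (by simp [hf, hc2])
          have hA1 : ¬ Reach G' ↑S' (Sum.inl c) (Sum.inl a2) :=
            fun h => hy ((hstepcl _ hg1 _ _ hsp2).mp h)
          have hB1 : ¬ Reach G' ↑S' (Sum.inl c) (Sum.inl b2) :=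
            fun h => hx ((hstepcl _ hg2 _ _ hsr1).mpr h)
          rw [hc2, hends2]
          exact iff_of_false hA1 hB1
        by_cases hc3 : e = e3
        · have hg1 : Sum.inl e3 ∉ (↑S' : Set (E ⊕ Fin 3)) :=
            fun h => hne _ (Finset.mem_coe.mp h) (by simp [hf, hc3])
          have hg2 : Sum.inr (2 : Fin 3) ∉ (↑S' : Set (E ⊕ Fin 3)) :=
            fun h => hne _ (Finset.mem_coe.mp h) (by simp [hf, hc3])
          have hA1 : ¬ Reach G' ↑S' (Sum.inl c) (Sum.inl a3) :=
            fun h => hy ((hstepcl _ hg1 _ _ hsp3).mp h)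
          have hB1 : ¬ Reach G' ↑S' (Sum.inl c) (Sum.inl b3) :=
            fun h => hx ((hstepcl _ hg2 _ _ hsr2).mpr h)
          rw [hc3, hends3]
          exact iff_of_false hA1 hB1
        · have hgl : Sum.inl e ∉ (↑S' : Set (E ⊕ Fin 3)) :=
            fun h => hne _ (Finset.mem_coe.mp h) (by simp [hf])
          exact hstepcl _ hgl _ _ (hspE e hc1 hc2 hc3)
      exact hncd ((reach_inv (fun v => Reach G' ↑S' (Sum.inl c) (Sum.inl v)) key hrc).mp
        Relation.ReflTransGen.refl)
    have hsymm4 : ∀ T : Finset E, T.card ≤ 3 → Reach ends ↑T b a :=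
      fun T hT => (h4 T hT).symm
    have hQall : ∀ (c : V) (z : V ⊕ Bool), Reach G' ↑S' (Sum.inl c) z →
        (QA (Sum.inl c) ↔ QA z) :=
      fun c z h => reach_inv QA (fun g _ => hQA g) h
    rcases hcover a with haA | haB
    · have hbA : Reach ends {e1, e2, e3} a1 b := haA.trans hab
      have hxa : ¬ Reach G' ↑S' (Sum.inl a) (Sum.inr false) := by
        intro h
        have := (hQall a _ h).mp haA
        simp [hQAdef] at this
      have hxb : ¬ Reach G' ↑S' (Sum.inl b) (Sum.inr false) := by
        intro h
        have := (hQall b _ h).mp hbA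
        simp [hQAdef] at this
      by_cases hytest : Reach G' ↑S' (Sum.inl a) (Sum.inr true)
      · have hyb : ¬ Reach G' ↑S' (Sum.inl b) (Sum.inr true) :=
          fun h => hnot (hytest.trans h.symm)
        exact cutback b a (fun h => hnot h.symm) hyb hxb hsymm4
      · exact cutback a b hnot hytest hxa (fun T hT => h4 T hT)
    · have hnaA : ¬ Reach ends {e1, e2, e3} a1 a := fun h => hdisj a h haB
      have hnbA : ¬ Reach ends {e1, e2, e3} a1 b := fun h => hnaA (h.trans hab.symm)
      have hya : ¬ Reach G' ↑S' (Sum.inl a) (Sum.inr true) := by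
        intro h
        exact hnaA ((hQall a _ h).mpr (by simp [hQAdef]))
      have hyb : ¬ Reach G' ↑S' (Sum.inl b) (Sum.inr true) := by
        intro h
        exact hnbA ((hQall b _ h).mpr (by simp [hQAdef]))
      by_cases hxtest : Reach G' ↑S' (Sum.inl a) (Sum.inr false)
      · have hxb : ¬ Reach G' ↑S' (Sum.inl b) (Sum.inr false) :=
          fun h => hnot (hxtest.trans h.symm)
        exact cutback b a (fun h => hnot h.symm) hyb hxb hsymm4
      · exact cutback a b hnot hya hxtest (fun T hT => h4 T hT)
  · -- backward direction
    rintro ⟨hr, h4'⟩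
    intro S hS
    by_contra hnot
    have hS3 : S.card ≤ 3 := by omega
    have ha1A : Reach ends {e1, e2, e3} a1 a1 := Relation.ReflTransGen.refl
    have hb1B : Reach ends {e1, e2, e3} b1 b1 := Relation.ReflTransGen.refl
    have hna : ∀ v : V, Reach ends {e1, e2, e3} a1 v → ¬ Reach ends {e1, e2, e3} b1 v :=
      fun v h h' => hdisj v h h'
    have hUcl : ∀ e : E, e ∉ (↑S : Set E) →
        (Reach ends ↑S a (ends e).1 ↔ Reach ends ↑S a (ends e).2) := by
      intro e he
      have hstep : Reach ends ↑S (ends e).1 (ends e).2 :=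
        Relation.ReflTransGen.single ⟨e, he, Or.inl rfl⟩
      exact ⟨fun h => h.trans hstep, fun h => h.trans hstep.symm⟩
    have hQinv := reach_inv QA (fun g _ => hQA g) hr
    rcases hcover a with haA | haB
    · -- both a and b on the A side
      have hbA : Reach ends {e1, e2, e3} a1 b := hQinv.mp haA
      set yin : Prop := (Reach ends ↑S a a1 ∧ Reach ends ↑S a a2) ∨
        (Reach ends ↑S a a1 ∧ Reach ends ↑S a a3) ∨
        (Reach ends ↑S a a2 ∧ Reach ends ↑S a a3) with hyind
      set U' : V ⊕ Bool → Prop := Sum.elim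
        (fun v => Reach ends ↑S a v ∧ Reach ends {e1, e2, e3} a1 v)
        (fun t => t = true ∧ yin) with hU'd
      set crossE : E → Prop :=
        fun e => ¬(U' (G' (Sum.inl e)).1 ↔ U' (G' (Sum.inl e)).2) with hcrd
      have hcr1 : crossE e1 ↔ ¬(Reach ends ↑S a a1 ↔ yin) := by
        simp only [hcrd, hsp1, hU'd, Sum.elim_inl, Sum.elim_inr]
        simp [iff_true_intro ha1A]
      have hcr2 : crossE e2 ↔ ¬(Reach ends ↑S a a2 ↔ yin) := by
        simp only [hcrd, hsp2, hU'd, Sum.elim_inl, Sum.elim_inr]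
        simp [iff_true_intro hA12]
      have hcr3 : crossE e3 ↔ ¬(Reach ends ↑S a a3 ↔ yin) := by
        simp only [hcrd, hsp3, hU'd, Sum.elim_inl, Sum.elim_inr]
        simp [iff_true_intro hA13]
      have hcrE : ∀ e : E, e ≠ e1 → e ≠ e2 → e ≠ e3 → (crossE e ↔
          ¬((Reach ends ↑S a (ends e).1 ∧ Reach ends {e1, e2, e3} a1 (ends e).1) ↔
            (Reach ends ↑S a (ends e).2 ∧ Reach ends {e1, e2, e3} a1 (ends e).2))) := by
        intro e hx1 hx2 hx3
        simp only [hcrd, hspE e hx1 hx2 hx3, hU'd, Sum.elim_inl]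
      have hcross_mem : ∀ e : E, e ≠ e1 → e ≠ e2 → e ≠ e3 → crossE e → e ∈ S := by
        intro e hx1 hx2 hx3 hcr
        by_contra heS
        have heS' : e ∉ (↑S : Set E) := by simpa using heS
        have hside := hsideA e (by rw [hCmem]; push_neg; exact ⟨hx1, hx2, hx3⟩)
        have hU := hUcl e heS'
        rw [hcrE e hx1 hx2 hx3] at hcr
        exact hcr (and_congr hU hside)
      have hmaj := maj_not_two (p := Reach ends ↑S a a1) (q := Reach ends ↑S a a2)
        (r := Reach ends ↑S a a3) (M := yin) Iff.rfl
      set T : Finset E := (S ∪ {e1, e2, e3}).filter crossE with hTd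
      have hT3 : T.card ≤ 3 := by
        by_contra hT4
        have hsplit := Finset.card_filter_add_card_filter_not
          (s := T) (p := fun e => e = e1 ∨ e = e2 ∨ e = e3)
        set T1 := T.filter (fun e => e = e1 ∨ e = e2 ∨ e = e3) with hT1d
        set T2 := T.filter (fun e => ¬(e = e1 ∨ e = e2 ∨ e = e3)) with hT2d
        have hcrT : ∀ u ∈ T, crossE u := fun u hu => (Finset.mem_filter.mp hu).2
        have hT1 : T1.card ≤ 1 := by
          rw [Finset.card_le_one]
          intro u hu w hw
          have hcu : crossE u := hcrT u (Finset.mem_filter.mp hu).1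
          have hcw : crossE w := hcrT w (Finset.mem_filter.mp hw).1
          have hdu := (Finset.mem_filter.mp hu).2
          have hdw := (Finset.mem_filter.mp hw).2
          rcases hdu with rfl | rfl | rfl <;> rcases hdw with rfl | rfl | rfl
          · rfl
          · exact absurd ⟨hcr1.mp hcu, hcr2.mp hcw⟩ hmaj.1
          · exact absurd ⟨hcr1.mp hcu, hcr3.mp hcw⟩ hmaj.2.1
          · exact absurd ⟨hcr1.mp hcw, hcr2.mp hcu⟩ hmaj.1
          · rfl
          · exact absurd ⟨hcr2.mp hcu, hcr3.mp hcw⟩ hmaj.2.2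
          · exact absurd ⟨hcr1.mp hcw, hcr3.mp hcu⟩ hmaj.2.1
          · exact absurd ⟨hcr2.mp hcw, hcr3.mp hcu⟩ hmaj.2.2
          · rfl
        have hT2S : T2 ⊆ S := by
          intro e he
          have h' := Finset.mem_filter.mp he
          have h'' := Finset.mem_filter.mp h'.1
          rcases Finset.mem_union.mp h''.1 with h | h
          · exact h
          · exact absurd (by simpa using h) h'.2
        have hT2 : T2.card ≤ 3 := le_trans (Finset.card_le_card hT2S) hS3
        have hT2c : T2.card = 3 := by omega
        have hT2S' : T2 = S := Finset.eq_of_subset_of_card_le hT2S (by omega)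
        have hallS : ∀ e ∈ S, crossE e ∧ ¬(e = e1 ∨ e = e2 ∨ e = e3) := by
          intro e he
          rw [← hT2S'] at he
          have h' := Finset.mem_filter.mp he
          exact ⟨(Finset.mem_filter.mp h'.1).2, h'.2⟩
        have hc1S : e1 ∉ (↑S : Set E) := by
          intro h; exact (hallS e1 (by exact_mod_cast h)).2 (Or.inl rfl)
        have hc2S : e2 ∉ (↑S : Set E) := by
          intro h; exact (hallS e2 (by exact_mod_cast h)).2 (Or.inr (Or.inl rfl))
        have hc3S : e3 ∉ (↑S : Set E) := by
          intro h; exact (hallS e3 (by exact_mod_cast h)).2 (Or.inr (Or.inr rfl))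
        have hSA : ∀ e ∈ S, (Reach ends {e1, e2, e3} a1 (ends e).1 ∨
            Reach ends {e1, e2, e3} a1 (ends e).2) := by
          intro e he
          have hcr := (hallS e he).1
          have hnc := (hallS e he).2
          push_neg at hnc
          rw [hcrE e hnc.1 hnc.2.1 hnc.2.2] at hcr
          by_contra hno
          push_neg at hno
          exact hcr (iff_of_false (fun h => hno.1 h.2) (fun h => hno.2 h.2))
        have htransB : ∀ u v : V, Reach ends {e1, e2, e3} b1 u →
            Reach ends {e1, e2, e3} u v → Reach ends ↑S u v := by
          intro u v hu huv
          refine (reach_transfer (fun w => Reach ends {e1, e2, e3} b1 w) ?_ hu huv).1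
          intro e heT hone
          have hside := hsideB e heT
          have hboth : Reach ends {e1, e2, e3} b1 (ends e).1 ∧
              Reach ends {e1, e2, e3} b1 (ends e).2 := by
            rcases hone with h | h
            · exact ⟨h, hside.mp h⟩
            · exact ⟨hside.mpr h, h⟩
          refine ⟨hboth, ?_⟩
          intro heS
          rcases hSA e (by exact_mod_cast heS) with h | h
          · exact hdisj _ h hboth.1
          · exact hdisj _ h hboth.2
        have hb12 : Reach ends ↑S b1 b2 := htransB b1 b2 hb1B hB12
        have hb13 : Reach ends ↑S b1 b3 := htransB b1 b3 hb1B hB13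
        have heq1 : Reach ends ↑S a a1 ↔ Reach ends ↑S a b1 := by
          have := hUcl e1 hc1S; rwa [hends1] at this
        have heq2 : Reach ends ↑S a a2 ↔ Reach ends ↑S a b2 := by
          have := hUcl e2 hc2S; rwa [hends2] at this
        have heq3 : Reach ends ↑S a a3 ↔ Reach ends ↑S a b3 := by
          have := hUcl e3 hc3S; rwa [hends3] at this
        have hbb12 : Reach ends ↑S a b1 ↔ Reach ends ↑S a b2 :=
          ⟨fun h => h.trans hb12, fun h => h.trans hb12.symm⟩
        have hbb13 : Reach ends ↑S a b1 ↔ Reach ends ↑S a b3 :=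
          ⟨fun h => h.trans hb13, fun h => h.trans hb13.symm⟩
        have hc12 : Reach ends ↑S a a1 ↔ Reach ends ↑S a a2 :=
          heq1.trans (hbb12.trans heq2.symm)
        have hc23 : Reach ends ↑S a a2 ↔ Reach ends ↑S a a3 :=
          heq2.trans (hbb12.symm.trans (hbb13.trans heq3.symm))
        have huni := maj_uniform (p := Reach ends ↑S a a1) (q := Reach ends ↑S a a2)
          (r := Reach ends ↑S a a3) (M := yin) Iff.rfl hc12 hc23
        have hT1e : T1 = ∅ := by
          rw [Finset.eq_empty_iff_forall_notMem]
          intro u hu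
          have h' := Finset.mem_filter.mp hu
          have hcu : crossE u := hcrT u h'.1
          rcases h'.2 with rfl | rfl | rfl
          · exact (hcr1.mp hcu) huni.1
          · exact (hcr2.mp hcu) huni.2.1
          · exact (hcr3.mp hcu) huni.2.2
        rw [hT1e] at hsplit
        simp at hsplit
        omega
      set S' : Finset (E ⊕ Fin 3) := T.image Sum.inl with hS'd
      have hS'card : S'.card ≤ 3 := le_trans Finset.card_image_le hT3
      have hRG := h4' S' (by exact_mod_cast hS'card)
      have hkey : ∀ g : E ⊕ Fin 3, g ∉ (↑S' : Set (E ⊕ Fin 3)) →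
          (U' (G' g).1 ↔ U' (G' g).2) := by
        intro g hg
        match g with
        | .inl e =>
          by_cases hcr : crossE e
          · exfalso
            have heSC : e ∈ S ∪ ({e1, e2, e3} : Finset E) := by
              by_cases hx1 : e = e1
              · simp [hx1]
              by_cases hx2 : e = e2
              · simp [hx2]
              by_cases hx3 : e = e3
              · simp [hx3]
              · exact Finset.mem_union_left _ (hcross_mem e hx1 hx2 hx3 hcr)
            exact hg (Finset.mem_coe.mpr (Finset.mem_image.mpr
              ⟨e, Finset.mem_filter.mpr ⟨heSC, hcr⟩, rfl⟩))
          · exact not_not.mp hcr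
        | .inr j =>
          fin_cases j
          · exact hsr0 ▸ iff_of_false (fun h => by simp [hU'd] at h)
              (fun h => hsep h.2)
          · exact hsr1 ▸ iff_of_false (fun h => by simp [hU'd] at h)
              (fun h => hnb b2 hB12 h.2)
          · exact hsr2 ▸ iff_of_false (fun h => by simp [hU'd] at h)
              (fun h => hnb b3 hB13 h.2)
      have hfin := (reach_inv U' hkey hRG).mp ⟨Relation.ReflTransGen.refl, haA⟩
      exact hnot hfin.1
    · -- both a and b on the B side
      have hnaA : ¬ Reach ends {e1, e2, e3} a1 a := fun h => hdisj a h haB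
      have hbB : Reach ends {e1, e2, e3} b1 b := by
        rcases hcover b with h | h
        · exact absurd (hQinv.mpr h) hnaA
        · exact h
      set xin : Prop := (Reach ends ↑S a b1 ∧ Reach ends ↑S a b2) ∨
        (Reach ends ↑S a b1 ∧ Reach ends ↑S a b3) ∨
        (Reach ends ↑S a b2 ∧ Reach ends ↑S a b3) with hxind
      set U' : V ⊕ Bool → Prop := Sum.elim
        (fun v => Reach ends ↑S a v ∧ Reach ends {e1, e2, e3} b1 v)
        (fun t => t = false ∧ xin) with hU'd
      set crossE : E → Prop :=
        fun e => ¬(U' (G' (Sum.inl e)).1 ↔ U' (G' (Sum.inl e)).2) with hcrd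
      set crossR : Fin 3 → Prop :=
        fun j => ¬(U' (G' (Sum.inr j)).1 ↔ U' (G' (Sum.inr j)).2) with hcrRd
      have hncr1 : ¬ crossE e1 := by
        simp only [hcrd, hsp1, hU'd, Sum.elim_inl, Sum.elim_inr]
        exact not_not.mpr (iff_of_false (fun h => hna a1 ha1A h.2)
          (fun h => absurd h.1 (by simp)))
      have hncr2 : ¬ crossE e2 := by
        simp only [hcrd, hsp2, hU'd, Sum.elim_inl, Sum.elim_inr]
        exact not_not.mpr (iff_of_false (fun h => hna a2 hA12 h.2)
          (fun h => absurd h.1 (by simp)))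
      have hncr3 : ¬ crossE e3 := by
        simp only [hcrd, hsp3, hU'd, Sum.elim_inl, Sum.elim_inr]
        exact not_not.mpr (iff_of_false (fun h => hna a3 hA13 h.2)
          (fun h => absurd h.1 (by simp)))
      have hcrR1 : crossR 0 ↔ ¬(xin ↔ Reach ends ↑S a b1) := by
        simp only [hcrRd, hsr0, hU'd, Sum.elim_inl, Sum.elim_inr]
        simp [iff_true_intro hb1B]
      have hcrR2 : crossR 1 ↔ ¬(xin ↔ Reach ends ↑S a b2) := by
        simp only [hcrRd, hsr1, hU'd, Sum.elim_inl, Sum.elim_inr]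
        simp [iff_true_intro hB12]
      have hcrR3 : crossR 2 ↔ ¬(xin ↔ Reach ends ↑S a b3) := by
        simp only [hcrRd, hsr2, hU'd, Sum.elim_inl, Sum.elim_inr]
        simp [iff_true_intro hB13]
      have hcrE : ∀ e : E, e ≠ e1 → e ≠ e2 → e ≠ e3 → (crossE e ↔
          ¬((Reach ends ↑S a (ends e).1 ∧ Reach ends {e1, e2, e3} b1 (ends e).1) ↔
            (Reach ends ↑S a (ends e).2 ∧ Reach ends {e1, e2, e3} b1 (ends e).2))) := by
        intro e hx1 hx2 hx3
        simp only [hcrd, hspE e hx1 hx2 hx3, hU'd, Sum.elim_inl]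
      have huniv : ∀ j : Fin 3, j = 0 ∨ j = 1 ∨ j = 2 := by decide
      have hmaj := maj_not_two (p := Reach ends ↑S a b1) (q := Reach ends ↑S a b2)
        (r := Reach ends ↑S a b3) (M := xin) Iff.rfl
      set R : Finset (Fin 3) := Finset.univ.filter crossR with hRd
      set T : Finset E := S.filter crossE with hTd
      have hTS : T ⊆ S := Finset.filter_subset _ _
      have hR1 : R.card ≤ 1 := by
        rw [Finset.card_le_one]
        intro u hu w hw
        have hcu : crossR u := (Finset.mem_filter.mp hu).2
        have hcw : crossR w := (Finset.mem_filter.mp hw).2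
        rcases huniv u with rfl | rfl | rfl <;> rcases huniv w with rfl | rfl | rfl
        · rfl
        · exact absurd ⟨fun h => hcrR1.mp hcu h.symm, fun h => hcrR2.mp hcw h.symm⟩ hmaj.1
        · exact absurd ⟨fun h => hcrR1.mp hcu h.symm, fun h => hcrR3.mp hcw h.symm⟩ hmaj.2.1
        · exact absurd ⟨fun h => hcrR1.mp hcw h.symm, fun h => hcrR2.mp hcu h.symm⟩ hmaj.1
        · rfl
        · exact absurd ⟨fun h => hcrR2.mp hcu h.symm, fun h => hcrR3.mp hcw h.symm⟩ hmaj.2.2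
        · exact absurd ⟨fun h => hcrR1.mp hcw h.symm, fun h => hcrR3.mp hcu h.symm⟩ hmaj.2.1
        · exact absurd ⟨fun h => hcrR2.mp hcw h.symm, fun h => hcrR3.mp hcu h.symm⟩ hmaj.2.2
        · rfl
      have hcard : T.card + R.card ≤ 3 := by
        by_contra hbad
        have hT3 : T.card ≤ 3 := le_trans (Finset.card_le_card hTS) hS3
        have hTS' : T = S := Finset.eq_of_subset_of_card_le hTS (by omega)
        have hallS : ∀ e ∈ S, crossE e := by
          intro e he
          rw [← hTS'] at he
          exact (Finset.mem_filter.mp he).2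
        have hc1S : e1 ∉ (↑S : Set E) := fun h => hncr1 (hallS e1 (by exact_mod_cast h))
        have hc2S : e2 ∉ (↑S : Set E) := fun h => hncr2 (hallS e2 (by exact_mod_cast h))
        have hc3S : e3 ∉ (↑S : Set E) := fun h => hncr3 (hallS e3 (by exact_mod_cast h))
        have hSB : ∀ e ∈ S, (Reach ends {e1, e2, e3} b1 (ends e).1 ∨
            Reach ends {e1, e2, e3} b1 (ends e).2) := by
          intro e he
          have hcr := hallS e he
          have hne1 : e ≠ e1 := fun hh => hncr1 (hh ▸ hcr)
          have hne2 : e ≠ e2 := fun hh => hncr2 (hh ▸ hcr)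
          have hne3 : e ≠ e3 := fun hh => hncr3 (hh ▸ hcr)
          rw [hcrE e hne1 hne2 hne3] at hcr
          by_contra hno
          push_neg at hno
          exact hcr (iff_of_false (fun h => hno.1 h.2) (fun h => hno.2 h.2))
        have htransA : ∀ u v : V, Reach ends {e1, e2, e3} a1 u →
            Reach ends {e1, e2, e3} u v → Reach ends ↑S u v := by
          intro u v hu huv
          refine (reach_transfer (fun w => Reach ends {e1, e2, e3} a1 w) ?_ hu huv).1
          intro e heT hone
          have hside := hsideA e heT
          have hboth : Reach ends {e1, e2, e3} a1 (ends e).1 ∧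
              Reach ends {e1, e2, e3} a1 (ends e).2 := by
            rcases hone with h | h
            · exact ⟨h, hside.mp h⟩
            · exact ⟨hside.mpr h, h⟩
          refine ⟨hboth, ?_⟩
          intro heS
          rcases hSB e (by exact_mod_cast heS) with h | h
          · exact hdisj _ hboth.1 h
          · exact hdisj _ hboth.2 h
        have ha12' : Reach ends ↑S a1 a2 := htransA a1 a2 ha1A hA12
        have ha13' : Reach ends ↑S a1 a3 := htransA a1 a3 ha1A hA13
        have heq1 : Reach ends ↑S a a1 ↔ Reach ends ↑S a b1 := by
          have := hUcl e1 hc1S; rwa [hends1] at this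
        have heq2 : Reach ends ↑S a a2 ↔ Reach ends ↑S a b2 := by
          have := hUcl e2 hc2S; rwa [hends2] at this
        have heq3 : Reach ends ↑S a a3 ↔ Reach ends ↑S a b3 := by
          have := hUcl e3 hc3S; rwa [hends3] at this
        have haa12 : Reach ends ↑S a a1 ↔ Reach ends ↑S a a2 :=
          ⟨fun h => h.trans ha12', fun h => h.trans ha12'.symm⟩
        have haa13 : Reach ends ↑S a a1 ↔ Reach ends ↑S a a3 :=
          ⟨fun h => h.trans ha13', fun h => h.trans ha13'.symm⟩
        have hd12 : Reach ends ↑S a b1 ↔ Reach ends ↑S a b2 :=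
          heq1.symm.trans (haa12.trans heq2)
        have hd23 : Reach ends ↑S a b2 ↔ Reach ends ↑S a b3 :=
          heq2.symm.trans (haa12.symm.trans (haa13.trans heq3))
        have huni := maj_uniform (p := Reach ends ↑S a b1) (q := Reach ends ↑S a b2)
          (r := Reach ends ↑S a b3) (M := xin) Iff.rfl hd12 hd23
        have hRe : R = ∅ := by
          rw [Finset.eq_empty_iff_forall_notMem]
          intro j hj
          have hcj : crossR j := (Finset.mem_filter.mp hj).2
          rcases huniv j with rfl | rfl | rfl
          · exact (hcrR1.mp hcj) huni.1.symm
          · exact (hcrR2.mp hcj) huni.2.1.symm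
          · exact (hcrR3.mp hcj) huni.2.2.symm
        rw [hRe] at hbad
        simp at hbad
        omega
      set S' : Finset (E ⊕ Fin 3) := T.image Sum.inl ∪ R.image Sum.inr with hS'd
      have hS'c : S'.card ≤ 3 :=
        le_trans (Finset.card_union_le _ _)
          (le_trans (add_le_add Finset.card_image_le Finset.card_image_le) hcard)
      have hRG := h4' S' (by exact_mod_cast hS'c)
      have hkey : ∀ g : E ⊕ Fin 3, g ∉ (↑S' : Set (E ⊕ Fin 3)) →
          (U' (G' g).1 ↔ U' (G' g).2) := by
        intro g hg
        match g with
        | .inl e =>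
          by_cases hcr : crossE e
          · exfalso
            have hne1 : e ≠ e1 := fun hh => hncr1 (hh ▸ hcr)
            have hne2 : e ≠ e2 := fun hh => hncr2 (hh ▸ hcr)
            have hne3 : e ≠ e3 := fun hh => hncr3 (hh ▸ hcr)
            have heS : e ∈ S := by
              by_contra heS
              have heS' : e ∉ (↑S : Set E) := by simpa using heS
              have hside := hsideB e (by rw [hCmem]; push_neg; exact ⟨hne1, hne2, hne3⟩)
              rw [hcrE e hne1 hne2 hne3] at hcr
              exact hcr (and_congr (hUcl e heS') hside)
            exact hg (Finset.mem_coe.mpr (Finset.mem_union_left _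
              (Finset.mem_image.mpr ⟨e, Finset.mem_filter.mpr ⟨heS, hcr⟩, rfl⟩)))
          · exact not_not.mp hcr
        | .inr j =>
          by_cases hcr : crossR j
          · exact absurd (Finset.mem_coe.mpr (Finset.mem_union_right _
              (Finset.mem_image.mpr ⟨j, Finset.mem_filter.mpr ⟨Finset.mem_univ j, hcr⟩, rfl⟩))) hg
          · exact not_not.mp hcr
      have hfin := (reach_inv U' hkey hRG).mp ⟨Relation.ReflTransGen.refl, haB⟩
      exact hnot hfin.1
end
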